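/- arXiv:2103.12925 — 2 statements merged into one kernel-verified Lean document; each statement's English description precedes it below -/
import Mathlib

section
/- Let B be a Boolean algebra and H a proper filter on B, with p ≤_H q defined by ∃h ∈ H, p ⊓ qᶜ ⊓ h = ⊥, and p ≈_H q iff p ≤_H q and q ≤_H p. Say p ∥ H if p ⊓ h ≠ ⊥ for all h ∈ H. Then for p, p' ∈ B with p ∥ H and p' ∥ H, the equivalence classes [p]_H and [p']_H are compatible in the quotient order (i.e., there exists r with r ∥ H, r ≤_H p and r ≤_H p') if and only if (p ⊓ p') ∥ H. -/
/-- In the quotient forcing B/H: for p, p' compatible with H, the classes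
[p]_H and [p']_H are compatible iff p ⊓ p' is compatible with H. -/
theorem quotient_compatible_iff {B : Type*} [BooleanAlgebra B]
    (H : Set B)
    (hne : H.Nonempty)
    (hup : ∀ p ∈ H, ∀ q : B, p ≤ q → q ∈ H)
    (hmeet : ∀ p ∈ H, ∀ q ∈ H, p ⊓ q ∈ H)
    (hproper : (⊥ : B) ∉ H)
    (p p' : B)
    (hp : ∀ h ∈ H, p ⊓ h ≠ ⊥)
    (hp' : ∀ h ∈ H, p' ⊓ h ≠ ⊥) :
    (∃ r : B, (∀ h ∈ H, r ⊓ h ≠ ⊥) ∧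
        (∃ h ∈ H, r ⊓ pᶜ ⊓ h = ⊥) ∧ (∃ h ∈ H, r ⊓ p'ᶜ ⊓ h = ⊥)) ↔
      (∀ h ∈ H, (p ⊓ p') ⊓ h ≠ ⊥) := by
  constructor
  · rintro ⟨r, hr, ⟨h₁, hh₁, e₁⟩, ⟨h₂, hh₂, e₂⟩⟩ h hh hcon
    have key : r ⊓ (h ⊓ (h₁ ⊓ h₂)) = ⊥ := by
      have le1 : r ⊓ h₁ ≤ p := by
        rw [← sdiff_eq_bot_iff, sdiff_eq]
        rw [← e₁]; ac_rfl
      have le2 : r ⊓ h₂ ≤ p' := by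
        rw [← sdiff_eq_bot_iff, sdiff_eq]
        rw [← e₂]; ac_rfl
      have le3 : r ⊓ (h ⊓ (h₁ ⊓ h₂)) ≤ p ⊓ p' ⊓ h := by
        refine le_inf (le_inf ?_ ?_) ?_
        · exact le_trans (le_inf inf_le_left
            (le_trans inf_le_right (le_trans inf_le_right inf_le_left))) le1
        · exact le_trans (le_inf inf_le_left
            (le_trans inf_le_right (le_trans inf_le_right inf_le_right))) le2
        · exact le_trans inf_le_right inf_le_left
      exact le_bot_iff.mp (hcon ▸ le3)
    exact hr _ (hmeet _ hh _ (hmeet _ hh₁ _ hh₂)) key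
  · intro hpp'
    refine ⟨p ⊓ p', hpp', ⟨hne.choose, hne.choose_spec, ?_⟩, ⟨hne.choose, hne.choose_spec, ?_⟩⟩
    · have : p ⊓ p' ⊓ pᶜ = ⊥ := by
        rw [inf_comm p p', inf_assoc, inf_compl_eq_bot, inf_bot_eq]
      rw [this, bot_inf_eq]
    · rw [inf_assoc p p' p'ᶜ, inf_compl_eq_bot, inf_bot_eq, bot_inf_eq]
end

section
/- Any two countable atomless Boolean algebras are isomorphic. -/
namespace CABA

open Finset

attribute [local instance] Classical.propDecidable

variable {X : Type*} [BooleanAlgebra X]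

/-- The meet over `s` of `g p` or its complement, according to the sign pattern `ε`. -/
noncomputable def pm {A : Type*} (g : A → X) (s : Finset A) (ε : A → Bool) : X :=
  s.inf fun p => if ε p then g p else (g p)ᶜ

theorem pm_congr {A : Type*} (g : A → X) {s : Finset A} {ε ε' : A → Bool}
    (h : ∀ p ∈ s, ε p = ε' p) : pm g s ε = pm g s ε' :=
  Finset.inf_congr rfl fun p hp => by rw [h p hp]

theorem pm_insert {A : Type*} [DecidableEq A] (g : A → X) (s : Finset A) (ε : A → Bool) (q : A) :
    pm g (insert q s) ε = (if ε q then g q else (g q)ᶜ) ⊓ pm g s ε :=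
  Finset.inf_insert

theorem pm_le_pos {A : Type*} (g : A → X) {s : Finset A} {ε : A → Bool} {p : A}
    (hp : p ∈ s) (h : ε p = true) : pm g s ε ≤ g p := by
  have := Finset.inf_le (f := fun p => if ε p then g p else (g p)ᶜ) hp
  simpa [h, pm] using this

theorem pm_le_neg {A : Type*} (g : A → X) {s : Finset A} {ε : A → Bool} {p : A}
    (hp : p ∈ s) (h : ε p = false) : pm g s ε ≤ (g p)ᶜ := by
  have := Finset.inf_le (f := fun p => if ε p then g p else (g p)ᶜ) hp
  simpa [h, pm] using this

/-- If `a` meets every sign-pattern meet trivially, then `a = ⊥`. -/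
theorem eq_bot_of_forall_pm {A : Type*} (g : A → X) (s : Finset A) :
    ∀ a : X, (∀ ε : A → Bool, pm g s ε ⊓ a = ⊥) → a = ⊥ := by
  classical
  induction s using Finset.induction_on with
  | empty =>
    intro a h
    simpa [pm] using h fun _ => true
  | insert _ _ hq ih =>
    rename_i q s
    intro a h
    have h1 : a ⊓ g q = ⊥ := by
      refine ih _ fun ε => ?_
      have := h (Function.update ε q true)
      rw [pm_insert, Function.update_self, if_pos rfl,
        pm_congr g (fun p hp => Function.update_of_ne (fun (he : p = q) => hq (he ▸ hp)) _ _)] at this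
      calc pm g s ε ⊓ (a ⊓ g q) = g q ⊓ pm g s ε ⊓ a := by
            rw [inf_comm a (g q), ← inf_assoc, inf_comm (pm g s ε) (g q)]
        _ = ⊥ := this
    have h2 : a ⊓ (g q)ᶜ = ⊥ := by
      refine ih _ fun ε => ?_
      have := h (Function.update ε q false)
      rw [pm_insert, Function.update_self, if_neg (by simp),
        pm_congr g (fun p hp => Function.update_of_ne (fun (he : p = q) => hq (he ▸ hp)) _ _)] at this
      calc pm g s ε ⊓ (a ⊓ (g q)ᶜ) = (g q)ᶜ ⊓ pm g s ε ⊓ a := by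
            rw [inf_comm a ((g q)ᶜ), ← inf_assoc, inf_comm (pm g s ε) ((g q)ᶜ)]
        _ = ⊥ := this
    have := sup_le_sup h1.le h2.le
    rwa [← inf_sup_left, sup_compl_eq_top, inf_top_eq, sup_idem, le_bot_iff] at this

variable {B C : Type*} [BooleanAlgebra B] [BooleanAlgebra C]

/-- A finset of pairs is a valid partial isomorphism iff corresponding sign-pattern
meets vanish simultaneously. -/
def Valid (s : Finset (B × C)) : Prop :=
  ∀ ε : B × C → Bool, pm Prod.fst s ε = ⊥ ↔ pm Prod.snd s ε = ⊥

theorem valid_empty [Nontrivial B] [Nontrivial C] : Valid (∅ : Finset (B × C)) := fun _ => by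
  unfold pm
  simp

theorem Valid.swap [DecidableEq (C × B)] {s : Finset (B × C)} (hs : Valid s) : Valid (s.image Prod.swap) := by
  intro ε
  have h1 : pm Prod.fst (s.image Prod.swap) ε = pm Prod.snd s (ε ∘ Prod.swap) := by
    simp [pm, Finset.inf_image]; rfl
  have h2 : pm Prod.snd (s.image Prod.swap) ε = pm Prod.fst s (ε ∘ Prod.swap) := by
    simp [pm, Finset.inf_image]; rfl
  rw [h1, h2]
  exact (hs (ε ∘ Prod.swap)).symm

/-- A valid partial isomorphism is monotone. -/
theorem Valid.mono {s : Finset (B × C)} (hs : Valid s) {b b' : B} {c c' : C}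
    (h1 : (b, c) ∈ s) (h2 : (b', c') ∈ s) (hbb : b ≤ b') : c ≤ c' := by
  have key : c ⊓ c'ᶜ = ⊥ := by
    refine eq_bot_of_forall_pm Prod.snd s _ fun ε => ?_
    by_cases e1 : ε (b, c)
    · by_cases e2 : ε (b', c')
      · have : pm Prod.snd s ε ≤ c' := pm_le_pos Prod.snd h2 (by simpa using e2)
        refine le_bot_iff.mp ?_
        calc pm Prod.snd s ε ⊓ (c ⊓ c'ᶜ) ≤ c' ⊓ c'ᶜ :=
              inf_le_inf this inf_le_right
          _ = ⊥ := inf_compl_eq_bot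
      · have hL : pm Prod.fst s ε = ⊥ := by
          refine le_bot_iff.mp ?_
          calc pm Prod.fst s ε ≤ b ⊓ b'ᶜ :=
                le_inf (pm_le_pos Prod.fst h1 (by simpa using e1))
                  (pm_le_neg Prod.fst h2 (by simpa using e2))
            _ ≤ b' ⊓ b'ᶜ := inf_le_inf_right _ hbb
            _ = ⊥ := inf_compl_eq_bot
        rw [(hs ε).mp hL, bot_inf_eq]
    · have : pm Prod.snd s ε ≤ cᶜ := pm_le_neg Prod.snd h1 (by simpa using e1)
      refine le_bot_iff.mp ?_
      calc pm Prod.snd s ε ⊓ (c ⊓ c'ᶜ) ≤ cᶜ ⊓ c :=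
            inf_le_inf this inf_le_left
        _ = ⊥ := compl_inf_eq_bot
  exact sdiff_eq_bot_iff.mp (show c \ c' = ⊥ by rw [sdiff_eq]; exact key)

/-- Key extension lemma: a valid partial isomorphism can be extended to any `b : B`,
using atomlessness of `C`. -/
theorem exists_insert_valid [DecidableEq (B × C)] (hC : ∀ c : C, c ≠ ⊥ → ∃ y : C, ⊥ < y ∧ y < c)
    {s : Finset (B × C)} (hs : Valid s) (b : B) : ∃ c : C, Valid (insert (b, c) s) := by
  classical
  choose y hy1 hy2 using hC
  -- extend a pattern on `s` to a global pattern
  let lift : ({ x // x ∈ s } → Bool) → (B × C → Bool) := fun g p =>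
    if h : p ∈ s then g ⟨p, h⟩ else false
  have hRne : ∀ g, pm Prod.fst s (lift g) ⊓ b ≠ ⊥ → pm Prod.snd s (lift g) ≠ ⊥ := by
    intro g hg hR
    exact hg (by rw [(hs (lift g)).mpr hR, bot_inf_eq])
  let d : ({ x // x ∈ s } → Bool) → C := fun g =>
    if h1 : pm Prod.fst s (lift g) ⊓ b = ⊥ then ⊥
    else if h2 : pm Prod.fst s (lift g) ⊓ bᶜ = ⊥ then pm Prod.snd s (lift g)
    else y (pm Prod.snd s (lift g)) (hRne g h1)
  have d_le : ∀ g, d g ≤ pm Prod.snd s (lift g) := by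
    intro g
    by_cases h1 : pm Prod.fst s (lift g) ⊓ b = ⊥
    · simp [d, h1]
    by_cases h2 : pm Prod.fst s (lift g) ⊓ bᶜ = ⊥
    · simp [d, h1, h2]
    · simp only [d, dif_neg h1, dif_neg h2]
      exact (hy2 _ (hRne g h1)).le
  have d_bot : ∀ g, (d g = ⊥ ↔ pm Prod.fst s (lift g) ⊓ b = ⊥) := by
    intro g
    by_cases h1 : pm Prod.fst s (lift g) ⊓ b = ⊥
    · simp [d, h1]
    by_cases h2 : pm Prod.fst s (lift g) ⊓ bᶜ = ⊥
    · simp only [d, dif_neg h1, dif_pos h2]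
      constructor
      · intro h; exact absurd h (hRne g h1)
      · intro h; exact absurd h h1
    · simp only [d, dif_neg h1, dif_neg h2]
      constructor
      · intro h; exact absurd h (ne_of_gt (hy1 _ (hRne g h1)))
      · intro h; exact absurd h h1
  have d_sdiff : ∀ g, (pm Prod.snd s (lift g) \ d g = ⊥ ↔ pm Prod.fst s (lift g) ⊓ bᶜ = ⊥) := by
    intro g
    by_cases h1 : pm Prod.fst s (lift g) ⊓ b = ⊥
    · simp only [d, dif_pos h1, sdiff_bot]
      have : pm Prod.fst s (lift g) ⊓ bᶜ = pm Prod.fst s (lift g) := by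
        rw [inf_eq_left]
        exact le_compl_iff_disjoint_right.mpr (disjoint_iff.mpr h1)
      rw [this]
      exact (hs (lift g)).symm
    by_cases h2 : pm Prod.fst s (lift g) ⊓ bᶜ = ⊥
    · simp [d, h1, h2]
    · simp only [d, dif_neg h1, dif_neg h2]
      constructor
      · intro h
        exact absurd ((sdiff_eq_bot_iff.mp h).antisymm (hy2 _ (hRne g h1)).le)
          (ne_of_gt (hy2 _ (hRne g h1)))
      · intro h; exact absurd h h2
  -- the element we add
  set c : C := (Finset.univ : Finset ({ x // x ∈ s } → Bool)).sup d with hc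
  -- meets of distinct-pattern sides are disjoint
  have disj : ∀ g g' : { x // x ∈ s } → Bool, g ≠ g' →
      pm Prod.snd s (lift g) ⊓ pm Prod.snd s (lift g') = ⊥ := by
    intro g g' hgg
    obtain ⟨x, hx⟩ := Function.ne_iff.mp hgg
    refine le_bot_iff.mp ?_
    cases h : g x with
    | false =>
      have h' : g' x = true := by
        cases hg' : g' x
        · exact absurd (h.trans hg'.symm) hx
        · rfl
      calc pm Prod.snd s (lift g) ⊓ pm Prod.snd s (lift g') ≤ x.1.2ᶜ ⊓ x.1.2 :=
            inf_le_inf (pm_le_neg Prod.snd x.2 (by simp [lift, x.2, h]))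
              (pm_le_pos Prod.snd x.2 (by simp [lift, x.2, h']))
        _ = ⊥ := compl_inf_eq_bot
    | true =>
      have h' : g' x = false := by
        cases hg' : g' x
        · rfl
        · exact absurd (h.trans hg'.symm) hx
      calc pm Prod.snd s (lift g) ⊓ pm Prod.snd s (lift g') ≤ x.1.2 ⊓ x.1.2ᶜ :=
            inf_le_inf (pm_le_pos Prod.snd x.2 (by simp [lift, x.2, h]))
              (pm_le_neg Prod.snd x.2 (by simp [lift, x.2, h']))
        _ = ⊥ := inf_compl_eq_bot
  -- restriction of a global pattern
  refine ⟨c, fun ε => ?_⟩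
  set g : { x // x ∈ s } → Bool := fun x => ε x.1 with hg
  have agree : ∀ p ∈ s, ε p = lift g p := by
    intro p hp; simp [lift, hp, hg]
  have eL : pm Prod.fst s ε = pm Prod.fst s (lift g) := pm_congr _ agree
  have eR : pm Prod.snd s ε = pm Prod.snd s (lift g) := pm_congr _ agree
  have hmeet : pm Prod.snd s ε ⊓ c = d g := by
    rw [hc, Finset.sup_inf_distrib_left]
    apply le_antisymm
    · refine Finset.sup_le fun g' _ => ?_
      by_cases hgg : g = g'
      · subst hgg
        exact inf_le_right
      · calc pm Prod.snd s ε ⊓ d g'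
            ≤ pm Prod.snd s (lift g) ⊓ pm Prod.snd s (lift g') := by
              rw [← eR]; exact inf_le_inf le_rfl (d_le g')
          _ = ⊥ := disj g g' hgg
          _ ≤ d g := bot_le
    · refine le_trans ?_ (Finset.le_sup (Finset.mem_univ g))
      exact le_inf (by rw [eR]; exact d_le g) le_rfl
  have hmeet' : pm Prod.snd s ε ⊓ cᶜ = pm Prod.snd s (lift g) \ d g := by
    have : pm Prod.snd s ε \ c = pm Prod.snd s ε \ d g := by
      rw [sdiff_eq_sdiff_iff_inf_eq_inf, hmeet]
      exact (inf_eq_right.mpr (by rw [eR]; exact d_le g)).symm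
    rw [← sdiff_eq, this, eR]
  rw [pm_insert Prod.fst s ε (b, c), pm_insert Prod.snd s ε (b, c)]
  by_cases e : ε (b, c)
  · rw [if_pos (by simpa using e), if_pos (by simpa using e)]
    have h2 : c ⊓ pm Prod.snd s ε = d g := by rw [inf_comm]; exact hmeet
    rw [h2, eL, inf_comm]
    exact (d_bot g).symm
  · rw [if_neg (by simpa using e), if_neg (by simpa using e)]
    have h3 : cᶜ ⊓ pm Prod.snd s ε = pm Prod.snd s (lift g) \ d g := by
      rw [inf_comm]; exact hmeet'
    rw [h3, eL, inf_comm]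
    exact (d_sdiff g).symm

/-- Symmetric extension lemma, via swapping. -/
theorem exists_insert_valid' [DecidableEq (B × C)]
    (hB : ∀ b : B, b ≠ ⊥ → ∃ y : B, ⊥ < y ∧ y < b)
    {s : Finset (B × C)} (hs : Valid s) (c : C) : ∃ b : B, Valid (insert (b, c) s) := by
  classical
  obtain ⟨b, hb⟩ := exists_insert_valid hB hs.swap c
  refine ⟨b, ?_⟩
  have h2 := hb.swap
  rwa [Finset.image_insert, Finset.image_image,
    show (Prod.swap ∘ Prod.swap : B × C → B × C) = id from rfl, Finset.image_id,
    Prod.swap_prod_mk] at h2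

theorem Valid.le_iff {s : Finset (B × C)} (hs : Valid s) {b b' : B} {c c' : C}
    (h1 : (b, c) ∈ s) (h2 : (b', c') ∈ s) : b ≤ b' ↔ c ≤ c' := by
  classical
  refine ⟨hs.mono h1 h2, fun h => ?_⟩
  exact hs.swap.mono (Finset.mem_image_of_mem Prod.swap h1)
    (Finset.mem_image_of_mem Prod.swap h2) h

end CABA

/-- Any two countable atomless (nontrivial) Boolean algebras are isomorphic. -/
theorem countable_atomless_boolean_algebras_isomorphic
    {B C : Type} [BooleanAlgebra B] [BooleanAlgebra C]
    [Countable B] [Countable C] [Nontrivial B] [Nontrivial C]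
    (hB : ∀ b : B, b ≠ ⊥ → ∃ c : B, ⊥ < c ∧ c < b)
    (hC : ∀ b : C, b ≠ ⊥ → ∃ c : C, ⊥ < c ∧ c < b) :
    Nonempty (B ≃o C) := by
  classical
  obtain ⟨encB⟩ := nonempty_encodable B
  obtain ⟨encC⟩ := nonempty_encodable C
  haveI := encB; haveI := encC
  let P := { s : Finset (B × C) // CABA.Valid s }
  letI : Preorder P := Subtype.preorder _
  haveI : Inhabited P := ⟨⟨∅, CABA.valid_empty⟩⟩
  let dleft : B → Order.Cofinal P := fun b =>
    { carrier := { f | ∃ c, (b, c) ∈ f.1 },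
      isCofinal := fun f => by
        obtain ⟨c, hc⟩ := CABA.exists_insert_valid hC f.2 b
        exact ⟨⟨insert (b, c) f.1, hc⟩, ⟨c, Finset.mem_insert_self _ _⟩,
          Finset.subset_insert _ _⟩ }
  let dright : C → Order.Cofinal P := fun c =>
    { carrier := { f | ∃ b, (b, c) ∈ f.1 },
      isCofinal := fun f => by
        obtain ⟨b, hb⟩ := CABA.exists_insert_valid' hB f.2 c
        exact ⟨⟨insert (b, c) f.1, hb⟩, ⟨b, Finset.mem_insert_self _ _⟩,
          Finset.subset_insert _ _⟩ }
  let tc : B ⊕ C → Order.Cofinal P := fun p => Sum.recOn p dleft dright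
  let I : Order.Ideal P := Order.idealOfCofinals default tc
  have hF : ∀ b : B, ∃ c : C, ∃ f, f ∈ I ∧ (b, c) ∈ f.1 := by
    intro b
    obtain ⟨f, ⟨c, hc⟩, hfI⟩ := Order.cofinal_meets_idealOfCofinals default tc (Sum.inl b)
    exact ⟨c, f, hfI, hc⟩
  have hG : ∀ c : C, ∃ b : B, ∃ f, f ∈ I ∧ (b, c) ∈ f.1 := by
    intro c
    obtain ⟨f, ⟨b, hb⟩, hfI⟩ := Order.cofinal_meets_idealOfCofinals default tc (Sum.inr c)
    exact ⟨b, f, hfI, hb⟩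
  choose F hFf using hF
  choose G hGf using hG
  have key : ∀ (b₁ : B) (c₁ : C) (b₂ : B) (c₂ : C),
      (∃ f, f ∈ I ∧ (b₁, c₁) ∈ (f : P).1) → (∃ f, f ∈ I ∧ (b₂, c₂) ∈ (f : P).1) →
      (b₁ ≤ b₂ ↔ c₁ ≤ c₂) := by
    rintro b₁ c₁ b₂ c₂ ⟨f, hf, h1⟩ ⟨g, hg, h2⟩
    obtain ⟨m, _, fm, gm⟩ := I.directed _ hf _ hg
    exact CABA.Valid.le_iff m.2 (fm h1) (gm h2)
  have keyFF : ∀ b₁ b₂ : B, b₁ ≤ b₂ ↔ F b₁ ≤ F b₂ := fun b₁ b₂ =>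
    key _ _ _ _ (hFf b₁) (hFf b₂)
  have keyGF : ∀ (c : C) (b : B), G c ≤ b ↔ c ≤ F b := fun c b =>
    key _ _ _ _ (hGf c) (hFf b)
  have keyFG : ∀ (b : B) (c : C), b ≤ G c ↔ F b ≤ c := fun b c =>
    key _ _ _ _ (hFf b) (hGf c)
  exact ⟨{ toFun := F, invFun := G,
           left_inv := fun b =>
             le_antisymm ((keyGF (F b) b).mpr le_rfl) ((keyFG b (F b)).mpr le_rfl),
           right_inv := fun c =>
             le_antisymm ((keyFG (G c) c).mp le_rfl) ((keyGF c (G c)).mp le_rfl),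
           map_rel_iff' := fun {a b} => (keyFF a b).symm }⟩
end
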